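/- arXiv:1410.4908 — 8 statements merged into one kernel-verified Lean document; each statement's English description precedes it below -/
import Mathlib

section
/- For two consecutive fractions p/q < p'/q' in the Farey sequence of order Q with q' > q, the angle θ at the center O = (p/q, 1/(2q²)) between the vertical ray from O down to (p/q, 0) and the segment from O to the tangency point of the two Ford circles satisfies tan θ = 2qq'/(q'² - q²). -/
/-- For consecutive Farey fractions `p/q < p'/q'` of order `Q` with `q' > q`, the angle `θ`
at the center `O = (p/q, 1/(2q²))` between the downward vertical direction `(0,-1)` and the
direction from `O` to the tangency point of the two Ford circles (which points toward the
other center `O' = (p'/q', 1/(2q'²))`) satisfies `tan θ = 2qq'/(q'² - q²)`.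
Here `θ = arccos (⟪(0,-1), O' - O⟫ / ‖O' - O‖)`. -/
theorem ford_circles_euclidean_angle (Q p q p' q' : ℕ)
    (hq : 0 < q) (hq' : 0 < q') (hqQ : q ≤ Q) (hq'Q : q' ≤ Q)
    (hcop : Nat.gcd p q = 1) (hcop' : Nat.gcd p' q' = 1)
    (hdet : p' * q = p * q' + 1) (hqlt : q < q') :
    ∀ v₁ v₂ θ : ℝ,
      v₁ = (p' : ℝ) / q' - (p : ℝ) / q →
      v₂ = 1 / (2 * (q' : ℝ) ^ 2) - 1 / (2 * (q : ℝ) ^ 2) →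
      θ = Real.arccos ((0 * v₁ + (-1) * v₂) / Real.sqrt (v₁ ^ 2 + v₂ ^ 2)) →
      Real.tan θ = 2 * (q : ℝ) * q' / ((q' : ℝ) ^ 2 - (q : ℝ) ^ 2) := by
  intro v₁ v₂ θ hv1 hv2 hθ
  set a : ℝ := (q : ℝ) with ha
  set b : ℝ := (q' : ℝ) with hb
  have ha0 : 0 < a := by rw [ha]; exact_mod_cast hq
  have hb0 : 0 < b := by rw [hb]; exact_mod_cast hq'
  have hab : a < b := by rw [ha, hb]; exact_mod_cast hqlt
  have hdetR : (p' : ℝ) * a = p * b + 1 := by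
    rw [ha, hb]; exact_mod_cast hdet
  have hv1' : v₁ = 1 / (a * b) := by
    rw [hv1]
    field_simp
    linear_combination hdetR
  have hsum : v₁ ^ 2 + v₂ ^ 2 = ((a ^ 2 + b ^ 2) / (2 * a ^ 2 * b ^ 2)) ^ 2 := by
    rw [hv1', hv2]
    field_simp
    ring
  have hsqrt : Real.sqrt (v₁ ^ 2 + v₂ ^ 2) = (a ^ 2 + b ^ 2) / (2 * a ^ 2 * b ^ 2) := by
    rw [hsum]
    exact Real.sqrt_sq (by positivity)
  have hcos : (0 * v₁ + (-1) * v₂) / Real.sqrt (v₁ ^ 2 + v₂ ^ 2)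
      = (b ^ 2 - a ^ 2) / (b ^ 2 + a ^ 2) := by
    rw [hsqrt, hv2]
    have h1 : (a ^ 2 + b ^ 2) ≠ 0 := by positivity
    field_simp
    ring
  rw [hθ, hcos, Real.tan_arccos]
  have hden : (0:ℝ) < b ^ 2 + a ^ 2 := by positivity
  have h1 : 1 - ((b ^ 2 - a ^ 2) / (b ^ 2 + a ^ 2)) ^ 2
      = (2 * a * b / (b ^ 2 + a ^ 2)) ^ 2 := by
    field_simp
    ring
  rw [h1, Real.sqrt_sq (by positivity)]
  have hba : b ^ 2 - a ^ 2 > 0 := by nlinarith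
  field_simp
end

section
/- Let T : Ω → Ω be the BCZ map T(x,y) = (y, -x + ⌊(1+x)/y⌋ y) on Ω = {(x,y) ∈ (0,1]² : x + y > 1}. If p_j/q_j, p_{j+1}/q_{j+1}, p_{j+2}/q_{j+2} are three consecutive fractions in the Farey sequence of order Q, then T(q_j/Q, q_{j+1}/Q) = (q_{j+1}/Q, q_{j+2}/Q). -/
/-- The BCZ map `T(x,y) = (y, -x + ⌊(1+x)/y⌋ y)`. -/
noncomputable def bczMap (z : ℝ × ℝ) : ℝ × ℝ :=
  (z.2, -z.1 + (⌊(1 + z.1) / z.2⌋ : ℝ) * z.2)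

lemma cross_lt {a b c d : ℕ} (hb : 0 < b) (hd : 0 < d) :
    (a : ℚ) / b < (c : ℚ) / d ↔ a * d < c * b := by
  rw [div_lt_div_iff₀ (by exact_mod_cast hb) (by exact_mod_cast hd)]
  exact_mod_cast Iff.rfl

set_option maxHeartbeats 1000000 in
lemma farey_adjacent (Q p₁ q₁ p₂ q₂ : ℕ) (hQ : 0 < Q) (hq₁ : 0 < q₁) (hq₂ : 0 < q₂)
    (hq₁Q : q₁ ≤ Q) (hq₂Q : q₂ ≤ Q) (hp₁ : p₁ ≤ q₁) (hp₂ : p₂ ≤ q₂)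
    (hcop₁ : Nat.gcd p₁ q₁ = 1) (hcop₂ : Nat.gcd p₂ q₂ = 1)
    (hlt : (p₁ : ℚ) / q₁ < (p₂ : ℚ) / q₂)
    (hconsec : ∀ a b : ℕ, 0 < b → b ≤ Q → a ≤ b → Nat.gcd a b = 1 →
      ¬ ((p₁ : ℚ) / q₁ < (a : ℚ) / b ∧ (a : ℚ) / b < (p₂ : ℚ) / q₂)) :
    (p₂ : ℤ) * q₁ = p₁ * q₂ + 1 ∧ Q < q₁ + q₂ := by
  have hlt' : p₁ * q₂ < p₂ * q₁ := (cross_lt hq₁ hq₂).mp hlt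
  have hltZ : (p₁ : ℤ) * q₂ + 1 ≤ p₂ * q₁ := by exact_mod_cast hlt'
  -- Bezout: find c₀ d₀ with q₁ c₀ - p₁ d₀ = 1
  have hbez : (1 : ℤ) = p₁ * Nat.gcdA p₁ q₁ + q₁ * Nat.gcdB p₁ q₁ := by
    have h := Nat.gcd_eq_gcd_ab p₁ q₁
    rw [hcop₁] at h; exact_mod_cast h
  obtain ⟨c, d, hcd, hd0, hdle, hdgt⟩ :
      ∃ c d : ℤ, (q₁ : ℤ) * c - p₁ * d = 1 ∧ 0 < d ∧ d ≤ Q ∧ (Q : ℤ) - q₁ < d := by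
    have hq₁Z : (0 : ℤ) < q₁ := by exact_mod_cast hq₁
    have hq₁QZ : (q₁ : ℤ) ≤ Q := by exact_mod_cast hq₁Q
    refine ⟨Nat.gcdB p₁ q₁ + p₁ * (((Q : ℤ) + Nat.gcdA p₁ q₁) / q₁),
      -Nat.gcdA p₁ q₁ + q₁ * (((Q : ℤ) + Nat.gcdA p₁ q₁) / q₁), by linear_combination -hbez, ?_, ?_, ?_⟩ <;>
    · have hdm : (q₁ : ℤ) * (((Q : ℤ) + Nat.gcdA p₁ q₁) / q₁) + ((Q : ℤ) + Nat.gcdA p₁ q₁) % q₁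
          = (Q : ℤ) + Nat.gcdA p₁ q₁ := Int.mul_ediv_add_emod _ _
      have hr0 : 0 ≤ ((Q : ℤ) + Nat.gcdA p₁ q₁) % q₁ := Int.emod_nonneg _ (by positivity)
      have hr1 : ((Q : ℤ) + Nat.gcdA p₁ q₁) % q₁ < q₁ := Int.emod_lt_of_pos _ hq₁Z
      linarith
  have hq₁Z : (0 : ℤ) < q₁ := by exact_mod_cast hq₁
  have hq₁QZ : (q₁ : ℤ) ≤ Q := by exact_mod_cast hq₁Q
  have hq₂QZ : (q₂ : ℤ) ≤ Q := by exact_mod_cast hq₂Q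
  have hp₁0 : (0 : ℤ) ≤ p₁ := by positivity
  have hc0 : 0 < c := by nlinarith
  have hq₂Z : (0 : ℤ) < q₂ := by exact_mod_cast hq₂
  have hp₂Z : (p₂ : ℤ) ≤ q₂ := by exact_mod_cast hp₂
  -- Claim 1: c/d ≤ p₂/q₂
  have claim1 : c * q₂ ≤ p₂ * d := by
    by_contra hcon
    push_neg at hcon
    have h1 : (p₂ : ℤ) * d + 1 ≤ c * q₂ := hcon
    have key : (q₂ : ℤ) = (c * q₂ - p₂ * d) * q₁ + ((p₂ : ℤ) * q₁ - p₁ * q₂) * d := by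
      linear_combination (-(q₂ : ℤ)) * hcd
    nlinarith [mul_le_mul_of_nonneg_right (by linarith : (1:ℤ) ≤ c * q₂ - p₂ * d) hq₁Z.le,
      mul_le_mul_of_nonneg_right (by linarith : (1:ℤ) ≤ (p₂:ℤ) * q₁ - p₁ * q₂) hd0.le]
  have hcld : c ≤ d := by nlinarith
  -- coprimality of c, d
  have hcopcd : IsCoprime c d := ⟨q₁, -p₁, by linarith⟩
  have hgcd1 : Nat.gcd c.toNat d.toNat = 1 := by
    have h1 : (c.toNat : ℤ) = c := Int.toNat_of_nonneg hc0.le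
    have h2 : (d.toNat : ℤ) = d := Int.toNat_of_nonneg hd0.le
    have := Int.isCoprime_iff_gcd_eq_one.mp hcopcd
    rw [← h1, ← h2, Int.gcd_natCast_natCast] at this
    exact this
  have hclt1 : (p₁ : ℚ) / q₁ < (c.toNat : ℚ) / d.toNat := by
    rw [cross_lt hq₁ (by omega)]
    have : (p₁ : ℤ) * d.toNat < c.toNat * q₁ := by
      rw [Int.toNat_of_nonneg hc0.le, Int.toNat_of_nonneg hd0.le]; linarith
    exact_mod_cast this
  have hnot := hconsec c.toNat d.toNat (by omega) (by omega) (by omega) hgcd1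
  have hge : ¬ ((c.toNat : ℚ) / d.toNat < (p₂ : ℚ) / q₂) := fun h => hnot ⟨hclt1, h⟩
  rw [cross_lt (by omega) hq₂] at hge
  push_neg at hge
  have hgeZ : (p₂ : ℤ) * d ≤ c * q₂ := by
    have : (p₂ : ℤ) * d.toNat ≤ c.toNat * q₂ := by exact_mod_cast hge
    rwa [Int.toNat_of_nonneg hc0.le, Int.toNat_of_nonneg hd0.le] at this
  have heq : c * q₂ = p₂ * d := le_antisymm claim1 hgeZ
  -- d = q₂
  have hdvd1 : d ∣ (q₂ : ℤ) := ⟨(p₂ : ℤ) * q₁ - p₁ * q₂, by linear_combination (q₁ : ℤ) * heq - (q₂ : ℤ) * hcd⟩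
  have hdvd2 : (q₂ : ℤ) ∣ d := by
    have hco : IsCoprime (q₂ : ℤ) (p₂ : ℤ) := by
      rw [Int.isCoprime_iff_gcd_eq_one, Int.gcd_natCast_natCast]
      exact Nat.coprime_comm.mp hcop₂
    exact hco.dvd_of_dvd_mul_left ⟨c, by linarith [heq]⟩
  have hdq₂ : d = q₂ := Int.dvd_antisymm hd0.le hq₂Z.le hdvd1 hdvd2
  have hq2eq : (q₂ : ℤ) = q₂ * ((p₂ : ℤ) * q₁ - p₁ * q₂) := by
    linear_combination (q₁ : ℤ) * heq - (q₂ : ℤ) * hcd + ((p₂ : ℤ) * q₁ - p₁ * q₂) * hdq₂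
  have hunimod : (p₂ : ℤ) * q₁ = p₁ * q₂ + 1 := by
    have hne : (q₂ : ℤ) ≠ 0 := by positivity
    have h := mul_left_cancel₀ hne (show (q₂ : ℤ) * ((p₂ : ℤ) * q₁ - p₁ * q₂) = q₂ * 1 by
      rw [mul_one]; linarith [hq2eq])
    linarith
  refine ⟨hunimod, ?_⟩
  -- mediant argument
  by_contra hQ'
  push_neg at hQ'
  have hgcdm : Nat.gcd (p₁ + p₂) (q₁ + q₂) = 1 := by
    have hco : IsCoprime ((p₁ : ℤ) + p₂) ((q₁ : ℤ) + q₂) := ⟨q₁, -p₁, by linear_combination hunimod⟩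
    have h := Int.isCoprime_iff_gcd_eq_one.mp hco
    rwa [show ((p₁ : ℤ) + p₂) = ((p₁ + p₂ : ℕ) : ℤ) by push_cast; ring,
      show ((q₁ : ℤ) + q₂) = ((q₁ + q₂ : ℕ) : ℤ) by push_cast; ring,
      Int.gcd_natCast_natCast] at h
  refine hconsec (p₁ + p₂) (q₁ + q₂) (by omega) hQ' (by omega) hgcdm ⟨?_, ?_⟩
  · rw [cross_lt hq₁ (by omega)]
    have : (p₁ : ℤ) * (q₁ + q₂) < (p₁ + p₂) * q₁ := by nlinarith
    exact_mod_cast this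
  · rw [cross_lt (by omega) hq₂]
    have : ((p₁ : ℤ) + p₂) * q₂ < p₂ * (q₁ + q₂) := by nlinarith
    exact_mod_cast this

/-- If `p₁/q₁ < p₂/q₂ < p₃/q₃` are three consecutive fractions in the Farey sequence of
order `Q`, then the BCZ map sends `(q₁/Q, q₂/Q)` to `(q₂/Q, q₃/Q)`. -/
theorem bcz_map_farey (Q p₁ q₁ p₂ q₂ p₃ q₃ : ℕ)
    (hQ : 0 < Q)
    (hq₁ : 0 < q₁) (hq₂ : 0 < q₂) (hq₃ : 0 < q₃)
    (hq₁Q : q₁ ≤ Q) (hq₂Q : q₂ ≤ Q) (hq₃Q : q₃ ≤ Q)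
    (hp₁ : p₁ ≤ q₁) (hp₂ : p₂ ≤ q₂) (hp₃ : p₃ ≤ q₃)
    (hcop₁ : Nat.gcd p₁ q₁ = 1) (hcop₂ : Nat.gcd p₂ q₂ = 1) (hcop₃ : Nat.gcd p₃ q₃ = 1)
    (hlt₁ : (p₁ : ℚ) / q₁ < (p₂ : ℚ) / q₂) (hlt₂ : (p₂ : ℚ) / q₂ < (p₃ : ℚ) / q₃)
    (hconsec₁ : ∀ a b : ℕ, 0 < b → b ≤ Q → a ≤ b → Nat.gcd a b = 1 →
      ¬ ((p₁ : ℚ) / q₁ < (a : ℚ) / b ∧ (a : ℚ) / b < (p₂ : ℚ) / q₂))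
    (hconsec₂ : ∀ a b : ℕ, 0 < b → b ≤ Q → a ≤ b → Nat.gcd a b = 1 →
      ¬ ((p₂ : ℚ) / q₂ < (a : ℚ) / b ∧ (a : ℚ) / b < (p₃ : ℚ) / q₃)) :
    bczMap ((q₁ : ℝ) / Q, (q₂ : ℝ) / Q) = ((q₂ : ℝ) / Q, (q₃ : ℝ) / Q) := by
  obtain ⟨h1, -⟩ := farey_adjacent Q p₁ q₁ p₂ q₂ hQ hq₁ hq₂ hq₁Q hq₂Q hp₁ hp₂ hcop₁ hcop₂ hlt₁ hconsec₁
  obtain ⟨h2, hsum⟩ := farey_adjacent Q p₂ q₂ p₃ q₃ hQ hq₂ hq₃ hq₂Q hq₃Q hp₂ hp₃ hcop₂ hcop₃ hlt₂ hconsec₂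
  -- q₂ ∣ q₁ + q₃
  have hdvd : q₂ ∣ q₁ + q₃ := by
    have heq : p₂ * (q₁ + q₃) = (p₁ + p₃) * q₂ := by
      have : (p₂ : ℤ) * (q₁ + q₃) = (p₁ + p₃) * q₂ := by linarith
      exact_mod_cast this
    have hdvd' : q₂ ∣ (q₁ + q₃) * p₂ := ⟨p₁ + p₃, by linarith [heq, Nat.mul_comm p₂ (q₁ + q₃)]⟩
    exact (Nat.coprime_comm.mp hcop₂).dvd_of_dvd_mul_right hdvd'
  obtain ⟨k, hk⟩ := hdvd
  have hkub : q₂ * k ≤ Q + q₁ := by omega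
  have hklb : Q + q₁ < q₂ * k + q₂ := by omega
  have hQR : (0 : ℝ) < Q := by exact_mod_cast hQ
  have hq₂R : (0 : ℝ) < q₂ := by exact_mod_cast hq₂
  have hfloor : ⌊(1 + (q₁ : ℝ) / Q) / ((q₂ : ℝ) / Q)⌋ = (k : ℤ) := by
    have hx : (1 + (q₁ : ℝ) / Q) / ((q₂ : ℝ) / Q) = ((Q : ℝ) + q₁) / q₂ := by
      field_simp
    rw [hx, Int.floor_eq_iff]
    constructor
    · rw [le_div_iff₀ hq₂R]
      have : ((q₂ : ℝ)) * k ≤ Q + q₁ := by exact_mod_cast hkub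
      push_cast
      linarith
    · rw [div_lt_iff₀ hq₂R]
      have : ((Q : ℝ)) + q₁ < q₂ * k + q₂ := by exact_mod_cast hklb
      push_cast
      linarith
  simp only [bczMap, Prod.mk.injEq]
  refine ⟨trivial, ?_⟩
  rw [hfloor]
  have hq₃k : (q₃ : ℝ) = q₂ * k - q₁ := by
    have : (q₁ : ℝ) + q₃ = q₂ * k := by exact_mod_cast hk
    linarith
  field_simp
  rw [hq₃k]
  push_cast
  ring
end

section
/- The BCZ map T(x,y) = (y, -x + ⌊(1+x)/y⌋ y) maps the triangle Ω = {(x,y) ∈ (0,1]² : x + y > 1} into itself. -/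
/-- The Farey triangle `Ω = {(x,y) ∈ (0,1]² : x + y > 1}`. -/
def fareyTriangle : Set (ℝ × ℝ) :=
  {z | 0 < z.1 ∧ z.1 ≤ 1 ∧ 0 < z.2 ∧ z.2 ≤ 1 ∧ 1 < z.1 + z.2}

/-- The BCZ map sends the triangle `Ω` into itself. -/
theorem bcz_maps_triangle_to_itself :
    ∀ z ∈ fareyTriangle, bczMap z ∈ fareyTriangle := by
  rintro ⟨x, y⟩ ⟨hx0, hx1, hy0, hy1, hxy⟩
  simp only [fareyTriangle, bczMap, Set.mem_setOf_eq] at *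
  set n : ℝ := (⌊(1 + x) / y⌋ : ℝ) with hn
  have h1 : n ≤ (1 + x) / y := Int.floor_le _
  have h2 : (1 + x) / y < n + 1 := Int.lt_floor_add_one _
  have hle : n * y ≤ 1 + x := (le_div_iff₀ hy0).mp h1
  have hlt : 1 + x < (n + 1) * y := (div_lt_iff₀ hy0).mp h2
  refine ⟨hy0, hy1, by nlinarith, by linarith, by nlinarith⟩
end

section
/- For the geometric statistic F(x,y) = (1/2)(y/x + x/y) on Ω = {(x,y) ∈ (0,1]² : x + y > 1}, and for every t > 1, the Lebesgue probability measure m (with dm = 2 dx dy) of the set {(x,y) ∈ Ω : F(x,y) ≥ t} equals 2 / ( (t + √(t²−1)) (t + √(t²−1) + 1) ). -/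
open MeasureTheory Set

open Set in

lemma volA (l : ℝ) (hl : 1 < l) :
    volume {z : ℝ × ℝ | 0 < z.1 ∧ z.2 ≤ 1 ∧ 1 < z.1 + z.2 ∧ l * z.1 ≤ z.2}
      = ENNReal.ofReal (1 / (2 * l * (l + 1))) := by
  have hl0 : (0:ℝ) < l := lt_trans one_pos hl
  have hA : MeasurableSet {z : ℝ × ℝ | 0 < z.1 ∧ z.2 ≤ 1 ∧ 1 < z.1 + z.2 ∧ l * z.1 ≤ z.2} := by
    apply MeasurableSet.inter
    · exact measurableSet_lt measurable_const measurable_fst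
    apply MeasurableSet.inter
    · exact measurableSet_le measurable_snd measurable_const
    apply MeasurableSet.inter
    · exact measurableSet_lt measurable_const (measurable_fst.add measurable_snd)
    · exact measurableSet_le (measurable_fst.const_mul l) measurable_snd
  rw [Measure.volume_eq_prod, Measure.prod_apply hA]
  have hsec : ∀ x : ℝ, volume (Prod.mk x ⁻¹' {z : ℝ × ℝ | 0 < z.1 ∧ z.2 ≤ 1 ∧ 1 < z.1 + z.2 ∧ l * z.1 ≤ z.2})
      = ENNReal.ofReal (min x (1 - l * x)) := by
    intro x
    rcases le_or_gt x 0 with hx | hx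
    · have : Prod.mk x ⁻¹' {z : ℝ × ℝ | 0 < z.1 ∧ z.2 ≤ 1 ∧ 1 < z.1 + z.2 ∧ l * z.1 ≤ z.2} = (∅ : Set ℝ) := by
        ext y; simp only [mem_preimage, mem_setOf_eq, mem_empty_iff_false, iff_false]
        intro h; exact absurd h.1 (not_lt.2 hx)
      rw [this, measure_empty, Eq.comm, ENNReal.ofReal_eq_zero]
      exact le_trans (min_le_left _ _) hx
    · rcases le_or_gt (l * x) (1 - x) with hc | hc
      · have : Prod.mk x ⁻¹' {z : ℝ × ℝ | 0 < z.1 ∧ z.2 ≤ 1 ∧ 1 < z.1 + z.2 ∧ l * z.1 ≤ z.2} = Ioc (1 - x) 1 := by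
          ext y
          simp only [mem_preimage, mem_setOf_eq, mem_Ioc]
          constructor
          · rintro ⟨_, h1, h2, _⟩; exact ⟨by linarith, h1⟩
          · rintro ⟨h1, h2⟩; exact ⟨hx, h2, by linarith, by linarith⟩
        rw [this, Real.volume_Ioc]
        congr 1
        rw [min_eq_left (by linarith)]; ring
      · have : Prod.mk x ⁻¹' {z : ℝ × ℝ | 0 < z.1 ∧ z.2 ≤ 1 ∧ 1 < z.1 + z.2 ∧ l * z.1 ≤ z.2} = Icc (l * x) 1 := by
          ext y
          simp only [mem_preimage, mem_setOf_eq, mem_Icc]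
          constructor
          · rintro ⟨_, h1, _, h3⟩; exact ⟨h3, h1⟩
          · rintro ⟨h1, h2⟩; exact ⟨hx, h2, by linarith, h1⟩
        rw [this, Real.volume_Icc]
        congr 1
        rw [min_eq_right (by linarith)]
  simp_rw [hsec]
  -- restrict the lintegral to Ioc 0 (1/l)
  have hind : (fun x : ℝ => ENNReal.ofReal (min x (1 - l * x)))
      = (Ioc (0:ℝ) (1/l)).indicator (fun x => ENNReal.ofReal (min x (1 - l * x))) := by
    ext x
    rcases em (x ∈ Ioc (0:ℝ) (1/l)) with h | h
    · rw [indicator_of_mem h]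
    · rw [indicator_of_notMem h, ENNReal.ofReal_eq_zero]
      rcases not_and_or.1 h with h' | h'
      · push_neg at h'; exact le_trans (min_le_left _ _) h'
      · push_neg at h'
        have : 1 - l * x ≤ 0 := by
          have := (div_lt_iff₀ hl0).1 h'
          linarith
        exact le_trans (min_le_right _ _) this
  rw [hind, lintegral_indicator measurableSet_Ioc]
  have hcont : Continuous (fun x : ℝ => min x (1 - l * x)) :=
    continuous_id.min (by continuity)
  have hint : IntegrableOn (fun x : ℝ => min x (1 - l * x)) (Ioc 0 (1/l)) volume :=
    hcont.integrableOn_Ioc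
  rw [← ofReal_integral_eq_lintegral_ofReal hint]
  · congr 1
    have hb : (0:ℝ) ≤ 1/l := by positivity
    rw [← intervalIntegral.integral_of_le hb]
    have hc1 : (0:ℝ) ≤ 1/(l+1) := by positivity
    have hc2 : 1/(l+1) ≤ 1/l := by
      apply div_le_div_of_nonneg_left one_pos.le hl0; linarith
    have i1 : IntervalIntegrable (fun x : ℝ => min x (1 - l * x)) volume 0 (1/(l+1)) :=
      hcont.intervalIntegrable _ _
    have i2 : IntervalIntegrable (fun x : ℝ => min x (1 - l * x)) volume (1/(l+1)) (1/l) :=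
      hcont.intervalIntegrable _ _
    rw [← intervalIntegral.integral_add_adjacent_intervals i1 i2]
    have e1 : ∫ x in (0:ℝ)..(1/(l+1)), min x (1 - l * x) = ∫ x in (0:ℝ)..(1/(l+1)), x := by
      apply intervalIntegral.integral_congr
      intro x hx
      rw [uIcc_of_le hc1] at hx
      apply min_eq_left
      have h1 : x * (l + 1) ≤ 1 := by
        calc x * (l+1) ≤ (1/(l+1)) * (l+1) := by
              apply mul_le_mul_of_nonneg_right hx.2 (by linarith)
          _ = 1 := by field_simp
      nlinarith
    have e2 : ∫ x in (1/(l+1):ℝ)..(1/l), min x (1 - l * x) = ∫ x in (1/(l+1):ℝ)..(1/l), (1 - l * x) := by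
      apply intervalIntegral.integral_congr
      intro x hx
      rw [uIcc_of_le hc2] at hx
      apply min_eq_right
      have h1 : 1 ≤ x * (l + 1) := by
        calc (1:ℝ) = (1/(l+1)) * (l+1) := by field_simp
          _ ≤ x * (l+1) := by apply mul_le_mul_of_nonneg_right hx.1 (by linarith)
      nlinarith
    rw [e1, e2, integral_id]
    have e3 : ∫ x in (1/(l+1):ℝ)..(1/l), (1 - l * x)
        = ((1/l) - (1/(l+1))) - l * (((1/l)^2 - (1/(l+1))^2)/2) := by
      rw [intervalIntegral.integral_sub intervalIntegrable_const
          (((by continuity : Continuous fun x : ℝ => l * x)).intervalIntegrable _ _)]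
      rw [intervalIntegral.integral_const, intervalIntegral.integral_const_mul, integral_id]
      simp [smul_eq_mul]
    rw [e3]
    field_simp
    ring
  · filter_upwards [ae_restrict_mem measurableSet_Ioc] with x hx
    have h1 : 0 < x := hx.1
    have h2 : l * x ≤ 1 := by
      have := hx.2
      calc l * x ≤ l * (1/l) := by apply mul_le_mul_of_nonneg_left this hl0.le
        _ = 1 := by field_simp
    show (0:ℝ) ≤ min x (1 - l * x)
    exact le_min h1.le (by linarith)

lemma measA (l : ℝ) : MeasurableSet {z : ℝ × ℝ | 0 < z.1 ∧ z.2 ≤ 1 ∧ 1 < z.1 + z.2 ∧ l * z.1 ≤ z.2} := by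
  apply MeasurableSet.inter
  · exact measurableSet_lt measurable_const measurable_fst
  apply MeasurableSet.inter
  · exact measurableSet_le measurable_snd measurable_const
  apply MeasurableSet.inter
  · exact measurableSet_lt measurable_const (measurable_fst.add measurable_snd)
  · exact measurableSet_le (measurable_fst.const_mul l) measurable_snd


/-- For the hyperbolic-distance statistic `F(x,y) = (1/2)(y/x + x/y)` on `Ω`, with the
probability measure `dm = 2 dx dy`, for every `t > 1` the measure of
`{F ≥ t}` equals `2 / ((t + √(t²-1))(t + √(t²-1) + 1))`. -/
theorem hyperbolic_statistic_tail_exact (t : ℝ) (ht : 1 < t) :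
    2 * (volume {z ∈ fareyTriangle |
        (1 / 2) * (z.2 / z.1 + z.1 / z.2) ≥ t}).toReal
      = 2 / ((t + Real.sqrt (t ^ 2 - 1)) * (t + Real.sqrt (t ^ 2 - 1) + 1)) := by
  set s := Real.sqrt (t ^ 2 - 1) with hs_def
  have hs0 : 0 ≤ s := Real.sqrt_nonneg _
  have hs2 : s ^ 2 = t ^ 2 - 1 := Real.sq_sqrt (by nlinarith)
  set l := t + s with hl_def
  have hl : 1 < l := by nlinarith
  have hl0 : (0:ℝ) < l := lt_trans one_pos hl
  have hll : l * l - 2 * t * l + 1 = 0 := by nlinarith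
  set A := {z : ℝ × ℝ | 0 < z.1 ∧ z.2 ≤ 1 ∧ 1 < z.1 + z.2 ∧ l * z.1 ≤ z.2} with hA_def
  set B := {z : ℝ × ℝ | 0 < z.2 ∧ z.1 ≤ 1 ∧ 1 < z.1 + z.2 ∧ l * z.2 ≤ z.1} with hB_def
  -- key equivalence on positive quadrant
  have key : ∀ x y : ℝ, 0 < x → 0 < y →
      (t ≤ 1 / 2 * (y / x + x / y) ↔ (l * x ≤ y ∨ l * y ≤ x)) := by
    intro x y hx hy
    have hxy : 0 < x * y := mul_pos hx hy
    have hconv : t ≤ 1 / 2 * (y / x + x / y) ↔ 2 * t * (x * y) ≤ y ^ 2 + x ^ 2 := by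
      rw [div_add_div _ _ hx.ne' hy.ne']
      rw [show (1:ℝ)/2 * ((y * y + x * x) / (x * y)) = (y * y + x * x) / (2 * (x * y)) by ring]
      rw [le_div_iff₀ (by positivity)]
      constructor <;> intro h <;> nlinarith
    rw [hconv]
    constructor
    · intro h
      by_contra hcon
      push_neg at hcon
      obtain ⟨h1, h2⟩ := hcon
      nlinarith [mul_pos (sub_pos.2 h1) (sub_pos.2 h2)]
    · rintro (h | h)
      · nlinarith [mul_nonneg (sub_nonneg.2 h) (by nlinarith : (0:ℝ) ≤ l * y - x)]
      · nlinarith [mul_nonneg (sub_nonneg.2 h) (by nlinarith : (0:ℝ) ≤ l * x - y)]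
  -- the tail set equals A ∪ B
  have hset : {z ∈ fareyTriangle | (1 / 2) * (z.2 / z.1 + z.1 / z.2) ≥ t} = A ∪ B := by
    ext z
    obtain ⟨x, y⟩ := z
    simp only [fareyTriangle, mem_setOf_eq, mem_union, hA_def, hB_def, ge_iff_le, sep_setOf]
    constructor
    · rintro ⟨⟨hx, hx1, hy, hy1, hxy⟩, hF⟩
      rcases (key x y hx hy).1 hF with h | h
      · exact Or.inl ⟨hx, hy1, hxy, h⟩
      · exact Or.inr ⟨hy, hx1, hxy, h⟩
    · rintro (⟨hx, hy1, hxy, h⟩ | ⟨hy, hx1, hxy, h⟩)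
      · have hy : 0 < y := lt_of_lt_of_le (by positivity) h
        have hx1 : x ≤ 1 := by nlinarith
        exact ⟨⟨hx, hx1, hy, hy1, hxy⟩, (key x y hx hy).2 (Or.inl h)⟩
      · have hx : 0 < x := lt_of_lt_of_le (by positivity) h
        have hy1 : y ≤ 1 := by nlinarith
        exact ⟨⟨hx, hx1, hy, hy1, hxy⟩, (key x y hx hy).2 (Or.inr h)⟩
  rw [hset]
  have hAm : MeasurableSet A := measA l
  have hBm : MeasurableSet B := by
    have : B = Prod.swap ⁻¹' A := by
      ext z; simp only [hA_def, hB_def, mem_preimage, Prod.swap, mem_setOf_eq]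
      constructor
      · rintro ⟨a, b, c, d⟩; exact ⟨a, b, by linarith, d⟩
      · rintro ⟨a, b, c, d⟩; exact ⟨a, b, by linarith, d⟩
    rw [this]; exact hAm.preimage measurable_swap
  have hdisj : Disjoint A B := by
    rw [Set.disjoint_left]
    rintro ⟨x, y⟩ ⟨hx, _, _, h1⟩ ⟨hy, _, _, h2⟩
    simp only at *
    nlinarith
  rw [measure_union hdisj hBm]
  have hvB : volume B = volume A := by
    have hswap : B = Prod.swap ⁻¹' A := by
      ext z; simp only [hA_def, hB_def, mem_preimage, Prod.swap, mem_setOf_eq]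
      constructor
      · rintro ⟨a, b, c, d⟩; exact ⟨a, b, by linarith, d⟩
      · rintro ⟨a, b, c, d⟩; exact ⟨a, b, by linarith, d⟩
    rw [hswap, Measure.volume_eq_prod]
    exact (Measure.measurePreserving_swap).measure_preimage hAm.nullMeasurableSet
  rw [hvB, volA l hl]
  rw [← two_mul, ← ENNReal.ofReal_ofNat, ← ENNReal.ofReal_mul (by norm_num)]
  rw [ENNReal.toReal_ofReal (by positivity)]
  field_simp
end

section
/- For F(x,y) = (1/2)(y/x + x/y) on Ω = {(x,y) ∈ (0,1]² : x+y > 1} with the probability measure dm = 2 dx dy, the tail function G_F(t) = m({(x,y) ∈ Ω : F(x,y) ≥ t}) satisfies G_F(t) ~ 1/(2t²) as t → ∞, i.e., lim_{t→∞} 2t² · G_F(t) = 1. -/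
open MeasureTheory

def SetA (r : ℝ) : Set (ℝ × ℝ) :=
  {z | 0 < z.1 ∧ z.1 ≤ 1 ∧ 0 < z.2 ∧ z.2 ≤ 1 ∧ 1 < z.1 + z.2 ∧ r * z.2 ≤ z.1}

lemma measA_s10 (r : ℝ) : MeasurableSet (SetA r) := by
  unfold SetA
  simp only [Set.setOf_and]
  exact (measurableSet_lt measurable_const measurable_fst).inter
    ((measurableSet_le measurable_fst measurable_const).inter
    ((measurableSet_lt measurable_const measurable_snd).inter
    ((measurableSet_le measurable_snd measurable_const).inter
    ((measurableSet_lt measurable_const (measurable_fst.add measurable_snd)).inter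
    (measurableSet_le (measurable_snd.const_mul r) measurable_fst)))))

lemma volA_s10 {r : ℝ} (hr : 1 < r) :
    volume (SetA r) = ENNReal.ofReal (1 / (2 * r * (r + 1))) := by
  have hr0 : 0 < r := by linarith
  rw [Measure.volume_eq_prod, Measure.prod_apply (measA_s10 r)]
  have hsec : ∀ x : ℝ, volume (Prod.mk x ⁻¹' SetA r) =
      (Set.Ioc (0:ℝ) 1).indicator (fun x => ENNReal.ofReal (x / r - (1 - x))) x := by
    intro x
    by_cases hx : x ∈ Set.Ioc (0:ℝ) 1
    · obtain ⟨hx0, hx1⟩ := hx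
      have hsec' : Prod.mk x ⁻¹' SetA r = Set.Ioc (1 - x) (x / r) := by
        ext y
        simp only [SetA, Set.mem_preimage, Set.mem_setOf_eq, Set.mem_Ioc]
        constructor
        · rintro ⟨_, _, _, _, h5, h6⟩
          exact ⟨by linarith, (le_div_iff₀ hr0).mpr (by nlinarith)⟩
        · rintro ⟨h1, h2⟩
          have hyx : y * r ≤ x := (le_div_iff₀ hr0).mp h2
          have hy0 : 0 < y := by linarith
          refine ⟨hx0, hx1, hy0, ?_, by linarith, by nlinarith⟩
          nlinarith
      rw [hsec', Real.volume_Ioc, Set.indicator_of_mem (Set.mem_Ioc.mpr ⟨hx0, hx1⟩)]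
    · have hsec' : Prod.mk x ⁻¹' SetA r = ∅ := by
        simp only [Set.mem_Ioc, not_and, not_le] at hx
        ext y
        simp only [SetA, Set.mem_preimage, Set.mem_setOf_eq, Set.mem_empty_iff_false,
          iff_false, not_and]
        intro h1 h2
        exact absurd (hx h1) (by linarith)
      rw [hsec', Set.indicator_of_notMem hx, measure_empty]
  rw [lintegral_congr hsec, lintegral_indicator measurableSet_Ioc]
  have hmax : ∀ x : ℝ, ENNReal.ofReal (x / r - (1 - x)) =
      ENNReal.ofReal (max (x / r - (1 - x)) 0) := by
    intro x
    rcases le_total (x / r - (1 - x)) 0 with h | h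
    · rw [max_eq_right h, ENNReal.ofReal_of_nonpos h, ENNReal.ofReal_zero]
    · rw [max_eq_left h]
  rw [lintegral_congr fun x => hmax x]
  set g : ℝ → ℝ := fun x => max (x / r - (1 - x)) 0 with hg
  have hg_cont : Continuous g :=
    ((continuous_id.div_const r).sub (continuous_const.sub continuous_id)).max continuous_const
  have hg_int : IntegrableOn g (Set.Ioc 0 1) := hg_cont.integrableOn_Ioc
  have hg_nonneg : 0 ≤ᵐ[volume.restrict (Set.Ioc (0:ℝ) 1)] g :=
    Filter.Eventually.of_forall fun x => le_max_right _ _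
  rw [← ofReal_integral_eq_lintegral_ofReal hg_int hg_nonneg]
  congr 1
  have ha0 : (0:ℝ) ≤ r / (r + 1) := by positivity
  have ha1 : r / (r + 1) ≤ 1 := by rw [div_le_one (by linarith)]; linarith
  rw [← intervalIntegral.integral_of_le zero_le_one,
    ← intervalIntegral.integral_add_adjacent_intervals (a := (0:ℝ)) (b := r/(r+1)) (c := 1)
      (hg_cont.intervalIntegrable _ _) (hg_cont.intervalIntegrable _ _)]
  have h1 : ∫ x in (0:ℝ)..(r/(r+1)), g x = 0 := by
    rw [intervalIntegral.integral_congr (g := fun _ => (0:ℝ))]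
    · simp
    · intro x hx
      rw [Set.uIcc_of_le ha0, Set.mem_Icc] at hx
      have key : x * (r + 1) ≤ r := (le_div_iff₀ (by linarith : (0:ℝ) < r+1)).mp hx.2
      have : x / r - (1 - x) ≤ 0 := by
        rw [sub_nonpos, div_le_iff₀ hr0]
        nlinarith
      exact max_eq_right this
  have h2 : ∫ x in (r/(r+1))..(1:ℝ), g x = 1 / (2 * r * (r + 1)) := by
    rw [intervalIntegral.integral_congr (g := fun x => (r⁻¹ + 1) * x - 1)]
    · rw [intervalIntegral.integral_sub (f := fun x => (r⁻¹ + 1) * x) ((continuous_const.mul continuous_id').intervalIntegrable _ _)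
        (intervalIntegrable_const), intervalIntegral.integral_const_mul, integral_id,
        intervalIntegral.integral_const]
      have hr1 : r + 1 ≠ 0 := by linarith
      rw [smul_eq_mul]
      field_simp
      ring
    · intro x hx
      rw [Set.uIcc_of_le ha1, Set.mem_Icc] at hx
      have key : r ≤ x * (r + 1) := (div_le_iff₀ (by linarith : (0:ℝ) < r+1)).mp hx.1
      have h0 : 0 ≤ x / r - (1 - x) := by
        rw [sub_nonneg, le_div_iff₀ hr0]
        nlinarith
      show max _ _ = _
      rw [max_eq_left h0]
      ring
  rw [h1, h2, zero_add]

def SetB (r : ℝ) : Set (ℝ × ℝ) :=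
  {z | 0 < z.1 ∧ z.1 ≤ 1 ∧ 0 < z.2 ∧ z.2 ≤ 1 ∧ 1 < z.1 + z.2 ∧ r * z.1 ≤ z.2}

lemma swapAB (r : ℝ) : SetB r = Prod.swap ⁻¹' SetA r := by
  ext z
  simp only [SetA, SetB, Set.mem_preimage, Set.mem_setOf_eq, Prod.fst_swap, Prod.snd_swap]
  constructor <;> rintro ⟨a, b, c, d, e, f⟩ <;> exact ⟨c, d, a, b, by linarith, f⟩

lemma measB (r : ℝ) : MeasurableSet (SetB r) := by
  rw [swapAB]; exact (measA_s10 r).preimage measurable_swap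

lemma volB {r : ℝ} (hr : 1 < r) :
    volume (SetB r) = ENNReal.ofReal (1 / (2 * r * (r + 1))) := by
  calc volume (SetB r) = (volume.prod volume) (Prod.swap ⁻¹' SetA r) := by
        rw [swapAB, Measure.volume_eq_prod]
    _ = (volume.prod volume) (SetA r) :=
        Measure.measurePreserving_swap.measure_preimage
          (by rw [← Measure.volume_eq_prod]; exact (measA_s10 r).nullMeasurableSet)
    _ = ENNReal.ofReal (1 / (2 * r * (r + 1))) := by rw [← Measure.volume_eq_prod, volA_s10 hr]

lemma disjAB {r : ℝ} (hr : 1 < r) : Disjoint (SetA r) (SetB r) := by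
  rw [Set.disjoint_left]
  rintro z ⟨h1, _, h3, _, _, h6⟩ ⟨_, _, _, _, _, h6'⟩
  nlinarith

noncomputable def rr (t : ℝ) : ℝ := t + Real.sqrt (t ^ 2 - 1)

lemma tail_eq {t : ℝ} (ht : 1 < t) :
    {z ∈ fareyTriangle | (1 / 2) * (z.2 / z.1 + z.1 / z.2) ≥ t} =
      SetA (rr t) ∪ SetB (rr t) := by
  have hs0 : 0 ≤ Real.sqrt (t ^ 2 - 1) := Real.sqrt_nonneg _
  have hs : Real.sqrt (t ^ 2 - 1) ^ 2 = t ^ 2 - 1 :=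
    Real.sq_sqrt (by nlinarith)
  set s := Real.sqrt (t ^ 2 - 1) with hsdef
  have hr1 : 1 < rr t := by unfold rr; linarith
  have hr0 : 0 < rr t := by linarith
  have hrt : rr t * rr t + 1 = 2 * t * rr t := by unfold rr; nlinarith
  set r := rr t with hrdef
  have key : ∀ x y : ℝ, 0 < x → 0 < y →
      (t ≤ (1 / 2) * (y / x + x / y) ↔ r * y ≤ x ∨ r * x ≤ y) := by
    intro x y hx hy
    have hxy : (1 / 2) * (y / x + x / y) = (x ^ 2 + y ^ 2) / (2 * (x * y)) := by
      field_simp; ring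
    rw [hxy, le_div_iff₀ (by positivity)]
    constructor
    · intro h
      by_contra hc
      push_neg at hc
      obtain ⟨h1, h2⟩ := hc
      have hneg : (x - r * y) * (r * x - y) < 0 :=
        mul_neg_of_neg_of_pos (by linarith) (by nlinarith)
      nlinarith [mul_le_mul_of_nonneg_left h (le_of_lt hr0)]
    · rintro (h | h)
      · have h2 : 0 ≤ (x - r * y) * (r * x - y) :=
          mul_nonneg (by linarith) (by nlinarith)
        nlinarith
      · have h2 : 0 ≤ (r * y - x) * (y - r * x) :=
          mul_nonneg (by nlinarith) (by linarith)
        nlinarith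
  ext z
  obtain ⟨x, y⟩ := z
  simp only [fareyTriangle, SetA, SetB, Set.mem_union, Set.mem_setOf_eq, Set.mem_sep_iff,
    ge_iff_le]
  constructor
  · rintro ⟨⟨hx, hx1, hy, hy1, hxy1⟩, hF⟩
    rcases (key x y hx hy).mp hF with h | h
    · exact Or.inl ⟨hx, hx1, hy, hy1, hxy1, h⟩
    · exact Or.inr ⟨hx, hx1, hy, hy1, hxy1, h⟩
  · rintro (⟨hx, hx1, hy, hy1, hxy1, h⟩ | ⟨hx, hx1, hy, hy1, hxy1, h⟩)
    · exact ⟨⟨hx, hx1, hy, hy1, hxy1⟩, (key x y hx hy).mpr (Or.inl h)⟩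
    · exact ⟨⟨hx, hx1, hy, hy1, hxy1⟩, (key x y hx hy).mpr (Or.inr h)⟩


lemma tendsto_w : Filter.Tendsto (fun t : ℝ => Real.sqrt (1 - 1 / t ^ 2))
    Filter.atTop (nhds 1) := by
  have h2 : Filter.Tendsto (fun t : ℝ => 1 / t ^ 2) Filter.atTop (nhds 0) := by
    have : Filter.Tendsto (fun t : ℝ => t ^ 2) Filter.atTop Filter.atTop :=
      Filter.tendsto_pow_atTop (by norm_num)
    simpa [one_div, Pi.inv_def] using this.inv_tendsto_atTop
  have h3 : Filter.Tendsto (fun t : ℝ => 1 - 1 / t ^ 2) Filter.atTop (nhds 1) := by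
    simpa using tendsto_const_nhds.sub h2
  have := (Real.continuous_sqrt.tendsto 1).comp h3
  simpa [Function.comp_def] using this

lemma tendsto_main : Filter.Tendsto (fun t : ℝ => 4 * t ^ 2 / (rr t * (rr t + 1)))
    Filter.atTop (nhds 1) := by
  have d1 : Filter.Tendsto (fun t : ℝ => 1 + Real.sqrt (1 - 1 / t ^ 2))
      Filter.atTop (nhds 2) := by
    have h := tendsto_const_nhds (x := (1:ℝ)) (f := Filter.atTop (α := ℝ)) |>.add tendsto_w
    rw [show (2:ℝ) = 1 + 1 by norm_num]
    exact h
  have d2 : Filter.Tendsto (fun t : ℝ => 1 + Real.sqrt (1 - 1 / t ^ 2) + 1 / t)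
      Filter.atTop (nhds 2) := by
    have h0 : Filter.Tendsto (fun t : ℝ => 1 / t) Filter.atTop (nhds 0) := by
      simpa [one_div] using
        (tendsto_inv_atTop_zero : Filter.Tendsto (fun t : ℝ => t⁻¹) Filter.atTop (nhds 0))
    simpa using d1.add h0
  have e1 : Filter.Tendsto (fun t : ℝ => 2 / (1 + Real.sqrt (1 - 1 / t ^ 2)))
      Filter.atTop (nhds (2 / 2)) := Filter.Tendsto.div tendsto_const_nhds d1 two_ne_zero
  have e2 : Filter.Tendsto (fun t : ℝ => 2 / (1 + Real.sqrt (1 - 1 / t ^ 2) + 1 / t))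
      Filter.atTop (nhds (2 / 2)) := Filter.Tendsto.div tendsto_const_nhds d2 two_ne_zero
  rw [show (1:ℝ) = 2 / 2 * (2 / 2) by norm_num]
  apply (e1.mul e2).congr'
  filter_upwards [Filter.eventually_ge_atTop (2:ℝ)] with t ht
  have ht0 : (0:ℝ) < t := by linarith
  have hw0 : 0 ≤ Real.sqrt (1 - 1 / t ^ 2) := Real.sqrt_nonneg _
  have hst : Real.sqrt (t ^ 2 - 1) = t * Real.sqrt (1 - 1 / t ^ 2) := by
    rw [show t ^ 2 - 1 = t ^ 2 * (1 - 1 / t ^ 2) by field_simp,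
      Real.sqrt_mul (sq_nonneg t), Real.sqrt_sq (le_of_lt ht0)]
  set w := Real.sqrt (1 - 1 / t ^ 2) with hw
  have h1 : (0:ℝ) < 1 + w := by linarith
  have h2 : (0:ℝ) < 1 + w + 1 / t := by positivity
  have hr : rr t = t * (1 + w) := by unfold rr; rw [hst]; ring
  rw [hr]
  have h3 : t * (1 + w) > 0 := by positivity
  have h4 : t * (1 + w) + 1 > 0 := by positivity
  field_simp
  ring


/-- For `F(x,y) = (1/2)(y/x + x/y)` on `Ω` with `dm = 2 dx dy`, the tail
`G_F(t) = m({F ≥ t})` satisfies `G_F(t) ~ 1/(2t²)`, i.e. `2t²·G_F(t) → 1`. -/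
theorem hyperbolic_statistic_tail_asymptotic :
    Filter.Tendsto
      (fun t : ℝ => 2 * t ^ 2 *
        (2 * (volume {z ∈ fareyTriangle |
          (1 / 2) * (z.2 / z.1 + z.1 / z.2) ≥ t}).toReal))
      Filter.atTop (nhds 1) := by
  apply tendsto_main.congr'
  filter_upwards [Filter.eventually_ge_atTop (2:ℝ)] with t ht
  have ht1 : 1 < t := by linarith
  have hr1 : 1 < rr t := by
    unfold rr
    have := Real.sqrt_nonneg (t ^ 2 - 1)
    linarith
  have hr0 : 0 < rr t := by linarith
  have hnn : (0:ℝ) ≤ 1 / (2 * rr t * (rr t + 1)) :=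
    div_nonneg zero_le_one (by nlinarith)
  have hvol : volume {z ∈ fareyTriangle | (1 / 2) * (z.2 / z.1 + z.1 / z.2) ≥ t} =
      ENNReal.ofReal (1 / (rr t * (rr t + 1))) := by
    rw [tail_eq ht1, measure_union (disjAB hr1) (measB _), volA_s10 hr1, volB hr1,
      ← ENNReal.ofReal_add hnn hnn]
    congr 1
    field_simp
    ring
  rw [hvol, ENNReal.toReal_ofReal (div_nonneg zero_le_one (by nlinarith))]
  field_simp
  ring
end

section
/- For F(x,y) = 1/(2x²) + 1/(2y²) on Ω = {(x,y) ∈ (0,1]² : x+y > 1} with the probability measure dm = 2 dx dy, the tail function G_F(t) = m({(x,y) ∈ Ω : F(x,y) ≥ t}) satisfies G_F(t) ~ 1/t as t → ∞, i.e., lim_{t→∞} t · G_F(t) = 1. -/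
open MeasureTheory
open Set

noncomputable def tri (s : Set ℝ) : Set (ℝ × ℝ) :=
  regionBetween (fun x => 1 - x) (fun _ => 1) s

lemma hc : Continuous (fun x : ℝ => 1 - x) := by continuity

lemma tri_vol_Ioo {a : ℝ} (ha : 0 ≤ a) :
    volume (tri (Ioo 0 a)) = ENNReal.ofReal (a ^ 2 / 2) := by
  rw [tri, Measure.volume_eq_prod,
    volume_regionBetween_eq_integral
      ((hc.integrableOn_Icc (a := 0) (b := a)).mono_set Ioo_subset_Icc_self)
      (integrableOn_const measure_Ioo_lt_top.ne) measurableSet_Ioo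
      (fun x hx => by linarith [hx.1])]
  have h1 : ∀ x ∈ Ioo (0:ℝ) a, (((fun _ => (1:ℝ)) - (fun x => 1 - x) : ℝ → ℝ)) x = x :=
    fun x _ => by simp [Pi.sub_apply]
  rw [setIntegral_congr_fun measurableSet_Ioo h1, ← integral_Ioc_eq_integral_Ioo,
    ← intervalIntegral.integral_of_le ha, integral_id]
  ring_nf

lemma tri_vol_Ioc {a : ℝ} (ha : 0 ≤ a) :
    volume (tri (Ioc 0 a)) = ENNReal.ofReal (a ^ 2 / 2) := by
  rw [tri, Measure.volume_eq_prod,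
    volume_regionBetween_eq_integral
      ((hc.integrableOn_Icc (a := 0) (b := a)).mono_set Ioc_subset_Icc_self)
      (integrableOn_const measure_Ioc_lt_top.ne) measurableSet_Ioc
      (fun x hx => by linarith [hx.1])]
  have h1 : ∀ x ∈ Ioc (0:ℝ) a, (((fun _ => (1:ℝ)) - (fun x => 1 - x) : ℝ → ℝ)) x = x :=
    fun x _ => by simp [Pi.sub_apply]
  rw [setIntegral_congr_fun measurableSet_Ioc h1,
    ← intervalIntegral.integral_of_le ha, integral_id]
  ring_nf

lemma tri_meas {s : Set ℝ} (hs : MeasurableSet s) : MeasurableSet (tri s) :=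
  measurableSet_regionBetween (measurable_const.sub measurable_id) measurable_const hs

lemma vol_swap {s : Set (ℝ × ℝ)} (hs : MeasurableSet s) :
    volume (Prod.swap ⁻¹' s) = volume s := by
  rw [Measure.volume_eq_prod]
  exact (Measure.measurePreserving_swap (μ := volume) (ν := volume)).measure_preimage
    hs.nullMeasurableSet

lemma mem_tri {s : Set ℝ} {z : ℝ × ℝ} :
    z ∈ tri s ↔ z.1 ∈ s ∧ 1 - z.1 < z.2 ∧ z.2 < 1 := by
  simp [tri, regionBetween, and_assoc]

-- lower inclusion
lemma lower_incl {t : ℝ} (ht : 2 ≤ t) :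
    tri (Ioo 0 (Real.sqrt (1/(2*t)))) ∪ Prod.swap ⁻¹' tri (Ioo 0 (Real.sqrt (1/(2*t))))
      ⊆ {z ∈ fareyTriangle | 1 / (2 * z.1 ^ 2) + 1 / (2 * z.2 ^ 2) ≥ t} := by
  set a := Real.sqrt (1/(2*t)) with ha
  have ht0 : (0:ℝ) < t := by linarith
  have ha2 : a ^ 2 = 1/(2*t) := Real.sq_sqrt (by positivity)
  have ha0 : 0 ≤ a := Real.sqrt_nonneg _
  have haa : 2 * t * a ^ 2 = 1 := by rw [ha2]; field_simp
  have hahalf : a ≤ 1/2 := by nlinarith [haa]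
  have key : ∀ x y : ℝ, x ∈ Ioo 0 a → 1 - x < y → y < 1 →
      (0 < x ∧ x ≤ 1 ∧ 0 < y ∧ y ≤ 1 ∧ 1 < x + y) ∧
        t ≤ 1 / (2 * x ^ 2) + 1 / (2 * y ^ 2) := by
    intro x y hx hy1 hy2
    have hx0 := hx.1
    have hxa := hx.2
    have hy0 : 0 < y := by linarith
    refine ⟨⟨hx0, by linarith, hy0, hy2.le, by linarith⟩, ?_⟩
    have hx2a : x ^ 2 < a ^ 2 := by nlinarith
    have h1 : t ≤ 1 / (2 * x ^ 2) := by
      rw [le_div_iff₀ (by positivity)]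
      nlinarith [hx2a, haa, ht0]
    have h2 : (0:ℝ) ≤ 1 / (2 * y ^ 2) := by positivity
    linarith
  rintro z (hz | hz)
  · rw [mem_tri] at hz
    exact (key z.1 z.2 hz.1 hz.2.1 hz.2.2).imp id id
  · rw [Set.mem_preimage, mem_tri] at hz
    obtain ⟨hf, hF⟩ := key z.2 z.1 hz.1 hz.2.1 hz.2.2
    exact ⟨⟨hf.2.2.1, hf.2.2.2.1, hf.1, hf.2.1, by linarith [hf.2.2.2.2]⟩, by linarith⟩

lemma upper_key {t x y : ℝ} (ht : 17 ≤ t) (hx : 0 < x) (hy1 : y < 1)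
    (hxy : 1 < x + y) (hxle : x ≤ y) (hF : t ≤ 1/(2*x^2) + 1/(2*y^2)) :
    (x, y) ∈ tri (Ioc 0 (Real.sqrt (1/(2*(t-1))))) := by
  set b := Real.sqrt (1/(2*(t-1))) with hb
  have ht1 : (0:ℝ) < 2*(t-1) := by linarith
  have hb2 : b ^ 2 = 1/(2*(t-1)) := Real.sq_sqrt (le_of_lt (div_pos one_pos ht1))
  have hb0 : 0 ≤ b := Real.sqrt_nonneg _
  have hy0 : 0 < y := lt_of_lt_of_le hx hxle
  have h1 : 1/(2*y^2) ≤ 1/(2*x^2) := by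
    apply one_div_le_one_div_of_le (by positivity)
    nlinarith
  have hxne : x ≠ 0 := ne_of_gt hx
  have h2 : t ≤ 1/(x^2) := by
    have e : 2 * (1/(2*x^2)) = 1/x^2 := by field_simp
    linarith [h1, hF, e.symm.le, e.le]
  have hx2 : x ^ 2 * t ≤ 1 := by
    rw [le_div_iff₀ (by positivity)] at h2
    nlinarith
  have hx4 : x ≤ 1/4 := by nlinarith
  have hy34 : 3/4 ≤ y := by linarith
  have h3 : 1/(2*y^2) ≤ 1 := by
    rw [div_le_one (by positivity)]
    nlinarith
  have h4 : t - 1 ≤ 1/(2*x^2) := by linarith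
  have h5 : x ^ 2 ≤ b ^ 2 := by
    rw [le_div_iff₀ (by positivity)] at h4
    rw [hb2, le_div_iff₀ ht1]
    nlinarith
  have hxb : x ≤ b := by nlinarith
  exact mem_tri.2 ⟨⟨hx, hxb⟩, by dsimp; linarith, hy1⟩

lemma upper_incl {t : ℝ} (ht : 17 ≤ t) :
    {z ∈ fareyTriangle | 1 / (2 * z.1 ^ 2) + 1 / (2 * z.2 ^ 2) ≥ t}
      ⊆ tri (Ioc 0 (Real.sqrt (1/(2*(t-1))))) ∪
        Prod.swap ⁻¹' tri (Ioc 0 (Real.sqrt (1/(2*(t-1))))) ∪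
        ((Set.univ ×ˢ {(1:ℝ)}) ∪ ({(1:ℝ)} ×ˢ Set.univ)) := by
  rintro ⟨x, y⟩ ⟨⟨hx0, hx1, hy0, hy1, hxy⟩, hF⟩
  rcases eq_or_lt_of_le hy1 with h | hylt
  · exact Or.inr (Or.inl ⟨Set.mem_univ _, h⟩)
  rcases eq_or_lt_of_le hx1 with h | hxlt
  · exact Or.inr (Or.inr ⟨h, Set.mem_univ _⟩)
  rcases le_total x y with hle | hle
  · exact Or.inl (Or.inl (upper_key ht hx0 hylt hxy hle hF))
  · refine Or.inl (Or.inr ?_)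
    exact upper_key ht hy0 hxlt (by linarith) hle (by dsimp at hF ⊢; linarith)

lemma vol_lower {t : ℝ} (ht : 2 ≤ t) :
    ENNReal.ofReal (1/(2*t)) ≤
      volume {z ∈ fareyTriangle | 1 / (2 * z.1 ^ 2) + 1 / (2 * z.2 ^ 2) ≥ t} := by
  set a := Real.sqrt (1/(2*t)) with ha
  have ht0 : (0:ℝ) < t := by linarith
  have ha2 : a ^ 2 = 1/(2*t) := Real.sq_sqrt (by positivity)
  have ha0 : 0 ≤ a := Real.sqrt_nonneg _
  have haa : 2 * t * a ^ 2 = 1 := by rw [ha2]; field_simp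
  have hahalf : a ≤ 1/2 := by nlinarith [haa]
  have hdisj : Disjoint (tri (Ioo 0 a)) (Prod.swap ⁻¹' tri (Ioo 0 a)) := by
    rw [Set.disjoint_left]
    intro z hz hz'
    rw [mem_tri] at hz
    rw [Set.mem_preimage, mem_tri] at hz'
    have h1 : z.2 < a := hz'.1.2
    have h2 : 1 - z.1 < z.2 := hz.2.1
    have h3 : z.1 < a := hz.1.2
    linarith
  calc ENNReal.ofReal (1/(2*t))
      = volume (tri (Ioo 0 a) ∪ Prod.swap ⁻¹' tri (Ioo 0 a)) := by
        rw [measure_union hdisj ((tri_meas measurableSet_Ioo).preimage measurable_swap),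
          tri_vol_Ioo ha0, vol_swap (tri_meas measurableSet_Ioo), tri_vol_Ioo ha0,
          ← ENNReal.ofReal_add (by positivity) (by positivity)]
        congr 1
        rw [ha2]
        ring
    _ ≤ _ := measure_mono (lower_incl ht)

lemma vol_upper {t : ℝ} (ht : 17 ≤ t) :
    volume {z ∈ fareyTriangle | 1 / (2 * z.1 ^ 2) + 1 / (2 * z.2 ^ 2) ≥ t}
      ≤ ENNReal.ofReal (1/(2*(t-1))) := by
  set b := Real.sqrt (1/(2*(t-1))) with hb
  have ht1 : (0:ℝ) < 2*(t-1) := by linarith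
  have hb2 : b ^ 2 = 1/(2*(t-1)) := Real.sq_sqrt (le_of_lt (div_pos one_pos ht1))
  have hb0 : 0 ≤ b := Real.sqrt_nonneg _
  have hN1 : volume ((Set.univ : Set ℝ) ×ˢ {(1:ℝ)}) = 0 := by
    rw [Measure.volume_eq_prod, Measure.prod_prod]; simp
  have hN2 : volume (({(1:ℝ)} : Set ℝ) ×ˢ (Set.univ : Set ℝ)) = 0 := by
    rw [Measure.volume_eq_prod, Measure.prod_prod]; simp
  calc volume {z ∈ fareyTriangle | 1 / (2 * z.1 ^ 2) + 1 / (2 * z.2 ^ 2) ≥ t}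
      ≤ volume (tri (Ioc 0 b) ∪ Prod.swap ⁻¹' tri (Ioc 0 b) ∪
          ((Set.univ ×ˢ {(1:ℝ)}) ∪ ({(1:ℝ)} ×ˢ Set.univ))) := measure_mono (upper_incl ht)
    _ ≤ volume (tri (Ioc 0 b) ∪ Prod.swap ⁻¹' tri (Ioc 0 b)) +
          volume ((Set.univ ×ˢ {(1:ℝ)}) ∪ (({(1:ℝ)} : Set ℝ) ×ˢ Set.univ)) :=
        measure_union_le _ _
    _ ≤ (volume (tri (Ioc 0 b)) + volume (Prod.swap ⁻¹' tri (Ioc 0 b))) + 0 := by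
        gcongr
        · exact measure_union_le _ _
        · exact le_of_eq (measure_union_null hN1 hN2)
    _ = ENNReal.ofReal (1/(2*(t-1))) := by
        rw [add_zero, vol_swap (tri_meas measurableSet_Ioc), tri_vol_Ioc hb0,
          ← ENNReal.ofReal_add (by positivity) (by positivity)]
        congr 1
        rw [hb2]
        ring


/-- For the Euclidean-distance statistic `F(x,y) = 1/(2x²) + 1/(2y²)` on `Ω` with
`dm = 2 dx dy`, the tail `G_F(t) = m({F ≥ t})` satisfies `G_F(t) ~ 1/t`,
i.e. `t·G_F(t) → 1`. -/
theorem euclidean_statistic_tail_asymptotic :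
    Filter.Tendsto
      (fun t : ℝ => t *
        (2 * (volume {z ∈ fareyTriangle |
          1 / (2 * z.1 ^ 2) + 1 / (2 * z.2 ^ 2) ≥ t}).toReal))
      Filter.atTop (nhds 1) := by
  have hupper : Filter.Tendsto (fun t : ℝ => t / (t - 1)) Filter.atTop (nhds 1) := by
    have h0 : Filter.Tendsto (fun t : ℝ => 1 + (t - 1)⁻¹) Filter.atTop (nhds (1 + 0)) :=
      tendsto_const_nhds.add
        (tendsto_inv_atTop_zero.comp (Filter.tendsto_atTop_add_const_right _ (-1) Filter.tendsto_id))
    rw [add_zero] at h0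
    apply h0.congr'
    filter_upwards [Filter.eventually_ge_atTop (2:ℝ)] with t ht
    have : t - 1 ≠ 0 := by linarith
    field_simp
    ring
  refine tendsto_of_tendsto_of_tendsto_of_le_of_le' tendsto_const_nhds hupper ?_ ?_
  · filter_upwards [Filter.eventually_ge_atTop (17:ℝ)] with t ht
    have ht0 : (0:ℝ) < t := by linarith
    have hfin : volume {z ∈ fareyTriangle |
        1 / (2 * z.1 ^ 2) + 1 / (2 * z.2 ^ 2) ≥ t} ≠ ⊤ :=
      ne_top_of_le_ne_top ENNReal.ofReal_ne_top (vol_upper ht)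
    have hlow := (ENNReal.ofReal_le_iff_le_toReal hfin).1 (vol_lower (by linarith))
    calc (1:ℝ) = t * (2 * (1/(2*t))) := by field_simp
      _ ≤ _ := by gcongr
  · filter_upwards [Filter.eventually_ge_atTop (17:ℝ)] with t ht
    have ht0 : (0:ℝ) < t := by linarith
    have hup : (volume {z ∈ fareyTriangle |
        1 / (2 * z.1 ^ 2) + 1 / (2 * z.2 ^ 2) ≥ t}).toReal ≤ 1/(2*(t-1)) :=
      ENNReal.toReal_le_of_le_ofReal (le_of_lt (div_pos one_pos (by linarith))) (vol_upper ht)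
    calc t * (2 * (volume {z ∈ fareyTriangle |
            1 / (2 * z.1 ^ 2) + 1 / (2 * z.2 ^ 2) ≥ t}).toReal)
        ≤ t * (2 * (1/(2*(t-1)))) := by gcongr
      _ = t / (t - 1) := by
          have : t - 1 ≠ 0 := by linarith
          field_simp
end

section
/- For F(x,y) = (1/2)(x/y − y/x) on Ω = {(x,y) ∈ (0,1]² : x+y > 1} with probability measure dm = 2 dx dy, the tail function G_F(t) = m({(x,y) ∈ Ω : F(x,y) ≥ t}) satisfies G_F(t) ≍ 1/t² as t → ∞; that is, there exist constants 0 < c₁ ≤ c₂ and t₀ such that c₁/t² ≤ G_F(t) ≤ c₂/t² for all t > t₀. -/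
open MeasureTheory

/-- For the Euclidean-slope statistic `F(x,y) = (1/2)(x/y - y/x)` on `Ω` with
`dm = 2 dx dy`, the tail `G_F(t) = m({F ≥ t})` satisfies `G_F(t) ≍ 1/t²`. -/
theorem slope_statistic_tail_order :
    ∃ c₁ c₂ t₀ : ℝ, 0 < c₁ ∧ c₁ ≤ c₂ ∧ ∀ t : ℝ, t₀ < t →
      c₁ / t ^ 2 ≤
        2 * (volume {z ∈ fareyTriangle |
          (1 / 2) * (z.1 / z.2 - z.2 / z.1) ≥ t}).toReal ∧
      2 * (volume {z ∈ fareyTriangle |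
          (1 / 2) * (z.1 / z.2 - z.2 / z.1) ≥ t}).toReal ≤ c₂ / t ^ 2 := by
  refine ⟨1/32, 1/2, 2, by norm_num, by norm_num, ?_⟩
  intro t ht
  have ht0 : (0:ℝ) < t := by linarith
  set T := {z ∈ fareyTriangle | (1 / 2) * (z.1 / z.2 - z.2 / z.1) ≥ t} with hTdef
  set e : ℝ := 1/(8*t) with he
  have he0 : 0 < e := by positivity
  have he16 : e < 1/16 := by
    rw [he, div_lt_div_iff₀ (by linarith) (by norm_num)]; linarith
  -- upper containment
  have hsub2 : T ⊆ Set.Icc (1 - 1/(2*t)) 1 ×ˢ Set.Icc 0 (1/(2*t)) := by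
    rintro ⟨x, y⟩ ⟨⟨hx0, hx1, hy0, hy1, hxy⟩, hF⟩
    simp only at hx0 hx1 hy0 hy1 hxy hF
    have hyx : 0 < y / x := div_pos hy0 hx0
    have h1 : 2*t ≤ x/y := by nlinarith [hF]
    have h2 : 2*t*y ≤ x := by
      have := (le_div_iff₀ hy0).mp h1; linarith
    have hy' : y ≤ 1/(2*t) := by
      rw [le_div_iff₀ (by linarith)]; nlinarith
    constructor
    · exact ⟨by linarith, hx1⟩
    · exact ⟨hy0.le, hy'⟩
  -- lower containment
  have hsub1 : Set.Icc (1 - e) 1 ×ˢ Set.Icc (2*e) (3*e) ⊆ T := by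
    rintro ⟨x, y⟩ ⟨⟨hx1, hx2⟩, ⟨hy1, hy2⟩⟩
    have hx0 : 0 < x := by linarith
    have hy0 : 0 < y := by linarith
    have h1e : 0 < 1 - e := by linarith
    refine ⟨⟨hx0, hx2, hy0, by linarith, by linarith⟩, ?_⟩
    have hA : (1-e)/(3*e) ≤ x/y := div_le_div₀ hx0.le (by linarith) hy0 hy2
    have hB : y/x ≤ (3*e)/(1-e) := div_le_div₀ (by linarith) hy2 h1e hx1
    have hAval : (1-e)/(3*e) = (8*t-1)/3 := by
      rw [he]; field_simp
    have h8 : (0:ℝ) < 8*t - 1 := by linarith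
    have hBval : (3*e)/(1-e) = 3/(8*t-1) := by
      rw [he, div_eq_div_iff (ne_of_gt h1e) (ne_of_gt h8)]
      simp only [he]
      field_simp
    have key : 2*t ≤ (8*t-1)/3 - 3/(8*t-1) := by
      rw [div_sub_div _ _ (by norm_num : (3:ℝ) ≠ 0) (ne_of_gt h8),
        le_div_iff₀ (by positivity)]
      nlinarith
    show (1 / 2) * (x / y - y / x) ≥ t
    rw [hAval] at hA; rw [hBval] at hB
    linarith
  -- volumes
  have volR : volume (Set.Icc (1 - e) 1 ×ˢ Set.Icc (2*e) (3*e))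
      = ENNReal.ofReal e * ENNReal.ofReal e := by
    rw [Measure.volume_eq_prod, Measure.prod_prod, Real.volume_Icc, Real.volume_Icc]
    congr 1 <;> ring_nf
  have volU : volume (Set.Icc (1 - 1/(2*t)) 1 ×ˢ Set.Icc 0 (1/(2*t)))
      = ENNReal.ofReal (1/(2*t)) * ENNReal.ofReal (1/(2*t)) := by
    rw [Measure.volume_eq_prod, Measure.prod_prod, Real.volume_Icc, Real.volume_Icc]
    congr 1 <;> ring_nf
  have hUfin : volume (Set.Icc (1 - 1/(2*t)) 1 ×ˢ Set.Icc 0 (1/(2*t))) ≠ ⊤ := by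
    rw [volU]; exact ENNReal.mul_ne_top ENNReal.ofReal_ne_top ENNReal.ofReal_ne_top
  have hTfin : volume T ≠ ⊤ :=
    fun h => hUfin (top_le_iff.mp (h ▸ measure_mono hsub2))
  have hle1 : volume (Set.Icc (1 - e) 1 ×ˢ Set.Icc (2*e) (3*e)) ≤ volume T :=
    measure_mono hsub1
  have hle2 : volume T ≤ volume (Set.Icc (1 - 1/(2*t)) 1 ×ˢ Set.Icc 0 (1/(2*t))) :=
    measure_mono hsub2
  have htr1 : e * e ≤ (volume T).toReal := by
    have := ENNReal.toReal_mono hTfin hle1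
    rwa [volR, ← ENNReal.ofReal_mul he0.le, ENNReal.toReal_ofReal (by positivity)] at this
  have htr2 : (volume T).toReal ≤ (1/(2*t)) * (1/(2*t)) := by
    have := ENNReal.toReal_mono hUfin hle2
    rwa [volU, ← ENNReal.ofReal_mul (by positivity), ENNReal.toReal_ofReal (by positivity)] at this
  constructor
  · have : (1/32) / t^2 = 2 * (e * e) := by rw [he]; field_simp; ring
    rw [this]; linarith
  · have : (1/2) / t^2 = 2 * ((1/(2*t)) * (1/(2*t))) := by field_simp
    rw [this]; linarith
end

section
/- For F(x,y) = (1/4)(1/(x³y) + 1/(xy³)) on Ω = {(x,y) ∈ (0,1]² : x+y > 1} with probability measure dm = 2 dx dy, the tail function G_F(t) = m({(x,y) ∈ Ω : F(x,y) ≥ t}) satisfies G_F(t) ≍ t^{−2/3} as t → ∞; i.e., there exist constants 0 < c₁ ≤ c₂ and t₀ such that c₁ t^{−2/3} ≤ G_F(t) ≤ c₂ t^{−2/3} for all t > t₀. -/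
open MeasureTheory Set

lemma vol_rect (p q r s : ℝ) :
    volume (Set.Ioc p q ×ˢ Set.Ioc r s) = ENNReal.ofReal (q-p) * ENNReal.ofReal (s-r) := by
  rw [Measure.volume_eq_prod, Measure.prod_prod, Real.volume_Ioc, Real.volume_Ioc]

set_option maxHeartbeats 1000000 in
/-- For the Euclidean-area statistic `F(x,y) = (1/4)(1/(x³y) + 1/(xy³))` on `Ω` with
`dm = 2 dx dy`, the tail `G_F(t) = m({F ≥ t})` satisfies `G_F(t) ≍ t^(-2/3)`. -/
theorem area_statistic_tail_order :
    ∃ c₁ c₂ t₀ : ℝ, 0 < c₁ ∧ c₁ ≤ c₂ ∧ ∀ t : ℝ, t₀ < t →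
      c₁ * t ^ (-(2 : ℝ) / 3) ≤
        2 * (volume {z ∈ fareyTriangle |
          (1 / 4) * (1 / (z.1 ^ 3 * z.2) + 1 / (z.1 * z.2 ^ 3)) ≥ t}).toReal ∧
      2 * (volume {z ∈ fareyTriangle |
          (1 / 4) * (1 / (z.1 ^ 3 * z.2) + 1 / (z.1 * z.2 ^ 3)) ≥ t}).toReal
        ≤ c₂ * t ^ (-(2 : ℝ) / 3) := by
  refine ⟨(1/2) * (4:ℝ) ^ (-(2:ℝ)/3), 4 * ((5:ℝ)/2) ^ ((2:ℝ)/3), 1, by positivity, ?_, ?_⟩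
  · have h1 : (4:ℝ) ^ (-(2:ℝ)/3) ≤ 1 :=
      Real.rpow_le_one_of_one_le_of_nonpos (by norm_num) (by norm_num)
    have h2 : (1:ℝ) ≤ ((5:ℝ)/2) ^ ((2:ℝ)/3) :=
      Real.one_le_rpow (by norm_num) (by norm_num)
    nlinarith
  intro t ht
  have ht0 : (0:ℝ) < t := by linarith
  set A := {z ∈ fareyTriangle |
      (1 / 4) * (1 / (z.1 ^ 3 * z.2) + 1 / (z.1 * z.2 ^ 3)) ≥ t} with hA
  set a := ((5:ℝ)/(2*t)) ^ ((1:ℝ)/3) with ha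
  set b := ((4:ℝ)*t) ^ (-(1:ℝ)/3) with hb
  have ha0 : 0 < a := Real.rpow_pos_of_pos (by positivity) _
  have hb0 : 0 < b := Real.rpow_pos_of_pos (by positivity) _
  have hb1 : b ≤ 1 :=
    Real.rpow_le_one_of_one_le_of_nonpos (by linarith) (by norm_num)
  have ha3 : a ^ 3 = 5/(2*t) := by
    rw [ha, ← Real.rpow_natCast (((5:ℝ)/(2*t)) ^ ((1:ℝ)/3)) 3,
      ← Real.rpow_mul (by positivity)]
    norm_num
  have hb3 : b ^ 3 = (4*t)⁻¹ := by
    rw [hb, ← Real.rpow_natCast (((4:ℝ)*t) ^ (-(1:ℝ)/3)) 3,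
      ← Real.rpow_mul (by positivity)]
    rw [show (-(1:ℝ)/3 * (3:ℕ)) = -1 by push_cast; ring, Real.rpow_neg_one]
  set R1 : Set (ℝ × ℝ) := Ioc (0:ℝ) a ×ˢ Ioc (1-a) 1 with hR1
  set R2 : Set (ℝ × ℝ) := Ioc (1-a) 1 ×ˢ Ioc (0:ℝ) a with hR2
  set B : Set (ℝ × ℝ) := Ioc (b/2) b ×ˢ Ioc (1-b/2) 1 with hB
  -- upper containment
  have hsub : A ⊆ R1 ∪ R2 := by
    rintro ⟨x, y⟩ ⟨⟨hx0, hx1, hy0, hy1, hxy⟩, hF⟩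
    simp only [ge_iff_le] at hF
    dsimp only at hx0 hx1 hy0 hy1 hxy hF
    have hx3 : (0:ℝ) < x ^ 3 := by positivity
    have hy3 : (0:ℝ) < y ^ 3 := by positivity
    rcases le_total x y with hc | hc
    · have hy2 : (1:ℝ)/2 < y := by linarith
      have h1 : 1 / (x^3 * y) ≤ 2 / x^3 := by
        rw [div_le_div_iff₀ (by positivity) hx3]; nlinarith
      have h2 : 1 / (x * y^3) ≤ 8 / x^3 := by
        rw [div_le_div_iff₀ (by positivity) hx3]
        have hy8 : (1:ℝ) ≤ 8 * y^3 := by nlinarith [sq_nonneg (2*y-1), sq_nonneg (2*y+1)]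
        have hxx : x^3 ≤ x := by
          nlinarith [mul_nonneg (mul_nonneg hx0.le (sub_nonneg.mpr hx1))
            (by linarith : (0:ℝ) ≤ 1+x)]
        nlinarith [mul_le_mul_of_nonneg_left hy8 hx0.le]
      have h3 : t ≤ (5/2) / x^3 := by
        have e : (1:ℝ)/4 * (2/x^3 + 8/x^3) = (5/2)/x^3 := by ring
        nlinarith
      have h4 : x ^ 3 ≤ a ^ 3 := by
        rw [ha3]
        rw [le_div_iff₀ hx3] at h3
        rw [le_div_iff₀ (by positivity)]
        nlinarith
      have h5 : x ≤ a := le_of_pow_le_pow_left₀ (by norm_num) ha0.le h4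
      exact Or.inl ⟨⟨hx0, h5⟩, ⟨by linarith, hy1⟩⟩
    · have hx2 : (1:ℝ)/2 < x := by linarith
      have h1 : 1 / (x * y^3) ≤ 2 / y^3 := by
        rw [div_le_div_iff₀ (by positivity) hy3]; nlinarith
      have h2 : 1 / (x^3 * y) ≤ 8 / y^3 := by
        rw [div_le_div_iff₀ (by positivity) hy3]
        have hx8 : (1:ℝ) ≤ 8 * x^3 := by nlinarith [sq_nonneg (2*x-1), sq_nonneg (2*x+1)]
        have hyy : y^3 ≤ y := by
          nlinarith [mul_nonneg (mul_nonneg hy0.le (sub_nonneg.mpr hy1))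
            (by linarith : (0:ℝ) ≤ 1+y)]
        nlinarith [mul_le_mul_of_nonneg_left hx8 hy0.le]
      have h3 : t ≤ (5/2) / y^3 := by
        have e : (1:ℝ)/4 * (8/y^3 + 2/y^3) = (5/2)/y^3 := by ring
        nlinarith
      have h4 : y ^ 3 ≤ a ^ 3 := by
        rw [ha3]
        rw [le_div_iff₀ hy3] at h3
        rw [le_div_iff₀ (by positivity)]
        nlinarith
      have h5 : y ≤ a := le_of_pow_le_pow_left₀ (by norm_num) ha0.le h4
      exact Or.inr ⟨⟨by linarith, hx1⟩, ⟨hy0, h5⟩⟩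
  -- lower containment
  have hBsub : B ⊆ A := by
    rintro ⟨x, y⟩ ⟨⟨hx1, hx2⟩, hy1, hy2⟩
    dsimp only at hx1 hx2 hy1 hy2
    have hx0 : 0 < x := lt_trans (by positivity) hx1
    have hy0 : 0 < y := by nlinarith
    refine ⟨⟨hx0, le_trans hx2 hb1, hy0, hy2, by dsimp only; nlinarith⟩, ?_⟩
    have hxb : x ^ 3 ≤ b ^ 3 := pow_le_pow_left₀ hx0.le hx2 3
    have hxy : x ^ 3 * y ≤ (4*t)⁻¹ := by
      rw [← hb3]; nlinarith [pow_pos hx0 3, pow_pos hb0 3]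
    have hxypos : 0 < x ^ 3 * y := by positivity
    have h1 : 4 * t ≤ 1 / (x ^ 3 * y) := by
      have h := one_div_le_one_div_of_le hxypos hxy
      rwa [one_div, inv_inv] at h
    have h2 : 0 ≤ 1 / (x * y ^ 3) := by positivity
    show t ≤ 1/4 * (1 / (x ^ 3 * y) + 1 / (x * y ^ 3))
    linarith
  -- volumes of rectangles
  have hvR1 : volume R1 = ENNReal.ofReal (a*a) := by
    rw [hR1, vol_rect, ← ENNReal.ofReal_mul (by linarith)]
    congr 1; ring
  have hvR2 : volume R2 = ENNReal.ofReal (a*a) := by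
    rw [hR2, vol_rect, ← ENNReal.ofReal_mul (by linarith)]
    congr 1; ring
  have hvB : volume B = ENNReal.ofReal ((b/2)*(b/2)) := by
    rw [hB, vol_rect, ← ENNReal.ofReal_mul (by linarith)]
    congr 1; ring
  have hvA : volume A ≤ ENNReal.ofReal (2*(a*a)) := by
    calc volume A ≤ volume R1 + volume R2 :=
          le_trans (measure_mono hsub) (measure_union_le _ _)
      _ = ENNReal.ofReal (2*(a*a)) := by
          rw [hvR1, hvR2, ← ENNReal.ofReal_add (by positivity) (by positivity)]
          congr 1; ring
  have hfin : volume A ≠ ⊤ := ne_top_of_le_ne_top ENNReal.ofReal_ne_top hvA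
  -- rpow computations
  have key_a : a * a = ((5:ℝ)/2) ^ ((2:ℝ)/3) * t ^ (-(2:ℝ)/3) := by
    rw [ha, ← Real.rpow_add (by positivity),
      show ((1:ℝ)/3 + (1:ℝ)/3) = (2:ℝ)/3 by norm_num,
      show (5:ℝ)/(2*t) = (5/2)*t⁻¹ by ring,
      Real.mul_rpow (by norm_num) (by positivity),
      Real.inv_rpow ht0.le, ← Real.rpow_neg ht0.le]
    ring_nf
  have key_b : b * b = (4:ℝ) ^ (-(2:ℝ)/3) * t ^ (-(2:ℝ)/3) := by
    rw [hb, ← Real.rpow_add (by positivity),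
      show (-(1:ℝ)/3 + -(1:ℝ)/3) = -(2:ℝ)/3 by norm_num,
      Real.mul_rpow (by norm_num) ht0.le]
  constructor
  · have hle : ENNReal.ofReal ((b/2)*(b/2)) ≤ volume A := by
      rw [← hvB]; exact measure_mono hBsub
    have h1 : (b/2)*(b/2) ≤ (volume A).toReal := by
      have h := ENNReal.toReal_mono hfin hle
      rwa [ENNReal.toReal_ofReal (by positivity)] at h
    nlinarith [key_b]
  · have h1 : (volume A).toReal ≤ 2*(a*a) :=
      ENNReal.toReal_le_of_le_ofReal (by positivity) hvA
    nlinarith [key_a]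
end
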